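/- Let t and n be natural numbers with t > 1 and n > 1. Then there exists a prime r dividing t^n − 1 that does not divide t^i − 1 for any 1 ≤ i < n, except exactly in the following cases: (n,t) = (6,2), or n = 2 and t = 2^l − 1 for some l ≥ 2. -/

import Mathlib

open Polynomial Finset
namespace Zsig


lemma cycl_cast (n : ℕ) (x : ℤ) :
    (((cyclotomic n ℤ).eval x : ℤ) : ℝ) = (cyclotomic n ℝ).eval (x : ℝ) := by
  have := cyclotomic.eval_apply x n (Int.castRingHom ℝ)
  simpa using this.symm

lemma cycl_cast_zmod (n : ℕ) (x : ℤ) (r : ℕ) :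
    (((cyclotomic n ℤ).eval x : ℤ) : ZMod r) = (cyclotomic n (ZMod r)).eval (x : ZMod r) := by
  have := cyclotomic.eval_apply x n (Int.castRingHom (ZMod r))
  simpa using this.symm

lemma cycl_pos {n : ℕ} (hn : 2 ≤ n) {x : ℝ} (hx : 1 < x) :
    0 < (cyclotomic n ℝ).eval x := by
  have h := sub_one_pow_totient_lt_cyclotomic_eval hn hx
  have : (0:ℝ) < (x-1) ^ Nat.totient n := pow_pos (by linarith) _
  linarith

lemma bridge {r t : ℕ} (ht : 1 ≤ t) (i : ℕ) :
    r ∣ t ^ i - 1 ↔ (r : ℤ) ∣ (t : ℤ) ^ i - 1 := by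
  rw [← Int.natCast_dvd_natCast, Nat.cast_sub (Nat.one_le_pow _ _ ht), Nat.cast_pow, Nat.cast_one]

lemma bridge2 {r t : ℕ} (i : ℕ) :
    (r : ℤ) ∣ (t : ℤ) ^ i - 1 ↔ (t : ZMod r) ^ i = 1 := by
  rw [← ZMod.intCast_zmod_eq_zero_iff_dvd, Int.cast_sub, Int.cast_pow, Int.cast_natCast,
    Int.cast_one, sub_eq_zero, eq_comm]




/-- cyclotomic value divides t^n - 1 -/
lemma cycl_dvd (n : ℕ) (x : ℤ) : (cyclotomic n ℤ).eval x ∣ x ^ n - 1 := by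
  have h := cyclotomic.dvd_X_pow_sub_one n ℤ
  have := (evalRingHom x).map_dvd h
  simpa using this

/-- if r prime divides the cyclotomic value and r ∤ n then t has order n mod r -/
lemma order_eq_of_not_dvd {r n t : ℕ} (hr : r.Prime) (hn : 0 < n)
    (hdvd : (r : ℤ) ∣ (cyclotomic n ℤ).eval (t : ℤ)) (hrn : ¬ r ∣ n) :
    orderOf (t : ZMod r) = n := by
  haveI : Fact r.Prime := ⟨hr⟩
  haveI : NeZero (n : ZMod r) := ⟨by
    rw [Ne, ZMod.natCast_eq_zero_iff]; exact hrn⟩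
  have hroot : IsRoot (cyclotomic n (ZMod r)) ((t : ℤ) : ZMod r) := by
    rw [IsRoot, ← cycl_cast_zmod, ZMod.intCast_zmod_eq_zero_iff_dvd]
    exact hdvd
  rw [isRoot_cyclotomic_iff] at hroot
  have := hroot.eq_orderOf
  simpa using this.symm

/-- if r prime divides the cyclotomic value and r ∣ n then t is a primitive
    (ordCompl[r] n)-th root of unity mod r -/
lemma primroot_of_dvd {r n t : ℕ} (hr : r.Prime) (hn : 0 < n)
    (hdvd : (r : ℤ) ∣ (cyclotomic n ℤ).eval (t : ℤ)) (hrn : r ∣ n) :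
    IsPrimitiveRoot (t : ZMod r) (ordCompl[r] n) := by
  haveI : Fact r.Prime := ⟨hr⟩
  haveI : NeZero ((ordCompl[r] n : ℕ) : ZMod r) := ⟨by
    rw [Ne, ZMod.natCast_eq_zero_iff]
    exact Nat.not_dvd_ordCompl hr hn.ne'⟩
  have hroot : IsRoot (cyclotomic (r ^ (n.factorization r) * ordCompl[r] n) (ZMod r))
      ((t : ℤ) : ZMod r) := by
    rw [Nat.ordProj_mul_ordCompl_eq_self, IsRoot, ← cycl_cast_zmod,
      ZMod.intCast_zmod_eq_zero_iff_dvd]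
    exact hdvd
  rw [isRoot_cyclotomic_prime_pow_mul_iff_of_charP] at hroot
  simpa using hroot



/-- order divides r - 1 -/
lemma e_dvd_sub_one {r e t : ℕ} (hr : r.Prime) (he : 0 < e)
    (h : IsPrimitiveRoot (t : ZMod r) e) : e ∣ r - 1 := by
  haveI : Fact r.Prime := ⟨hr⟩
  have ht0 : (t : ZMod r) ≠ 0 := by
    intro h0
    have := h.pow_eq_one
    rw [h0, zero_pow he.ne'] at this
    exact zero_ne_one this
  have hpow : (t : ZMod r) ^ (r - 1) = 1 := ZMod.pow_card_sub_one_eq_one ht0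
  have := orderOf_dvd_of_pow_eq_one hpow
  rwa [h.eq_orderOf]

/-- any prime q dividing n other than r is < r -/
lemma lt_of_prime_dvd {r n t q : ℕ} (hr : r.Prime) (hn : 0 < n)
    (hdvd : (r : ℤ) ∣ (cyclotomic n ℤ).eval (t : ℤ)) (hrn : r ∣ n)
    (hq : q.Prime) (hqn : q ∣ n) (hne : q ≠ r) : q < r := by
  have hpr := primroot_of_dvd hr hn hdvd hrn
  have he : 0 < ordCompl[r] n := Nat.ordCompl_pos r hn.ne'
  have hdvd1 : ordCompl[r] n ∣ r - 1 := e_dvd_sub_one hr he hpr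
  have hqe : q ∣ ordCompl[r] n := by
    have hsplit : q ∣ r ^ n.factorization r * ordCompl[r] n := by
      rw [Nat.ordProj_mul_ordCompl_eq_self]; exact hqn
    rcases (Nat.Prime.dvd_mul hq).mp hsplit with h | h
    · exact absurd ((Nat.prime_dvd_prime_iff_eq hq hr).mp (hq.dvd_of_dvd_pow h)) hne
    · exact h
  have : q ∣ r - 1 := hqe.trans hdvd1
  have h1 : 1 ≤ r - 1 := by have := hr.two_le; omega
  have := Nat.le_of_dvd h1 this
  omega

/-- for odd p and A ≡ 1 mod p, the geometric sum ∑_{j<p} A^j is ≡ p mod p². -/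
lemma geom_sum_mod_sq {p : ℕ} (hp : p.Prime) (hodd : Odd p) {A : ℤ}
    (hA : (p : ℤ) ∣ A - 1) :
    (p : ℤ) ^ 2 ∣ (∑ j ∈ range p, A ^ j) - p := by
  obtain ⟨c, hc⟩ := hA
  have hA' : A = 1 + p * c := by linarith
  have key : ∀ m : ℕ, ∃ d : ℤ, A ^ m = 1 + m * p * c + p ^ 2 * d := by
    intro m
    induction m with
    | zero => exact ⟨0, by simp⟩
    | succ k ih =>
      obtain ⟨d, hd⟩ := ih
      refine ⟨c ^ 2 * k + d * (1 + p * c), ?_⟩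
      rw [pow_succ, hd, hA']
      push_cast
      ring
  have key2 : ∀ m : ℕ, ∃ d : ℤ, 2 * (∑ j ∈ range m, A ^ j) = 2 * m + m * (m - 1) * p * c + p ^ 2 * d := by
    intro m
    induction m with
    | zero => exact ⟨0, by simp⟩
    | succ k ih =>
      obtain ⟨d, hd⟩ := ih
      obtain ⟨d', hd'⟩ := key k
      refine ⟨d + 2 * d', ?_⟩
      rw [Finset.sum_range_succ, mul_add, hd, hd']
      push_cast
      ring
  obtain ⟨d, hd⟩ := key2 p
  obtain ⟨k, hk⟩ := hodd
  have h2 : 2 * ((∑ j ∈ range p, A ^ j) - p) = p ^ 2 * (2 * k * c + d) := by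
    have : ((p : ℤ) - 1) = 2 * k := by rw [hk]; push_cast; ring
    rw [mul_sub, hd, this]
    ring
  have hdvd2 : (p : ℤ) ^ 2 ∣ 2 * ((∑ j ∈ range p, A ^ j) - p) := ⟨_, h2⟩
  have hcop : IsCoprime ((p : ℤ) ^ 2) 2 := by
    apply IsCoprime.pow_left
    rw [Int.isCoprime_iff_gcd_eq_one]
    have hnd : ¬ (2 ∣ p) := by omega
    have h2 : (2:ℤ) = ((2:ℕ):ℤ) := by norm_num
    rw [h2, Int.gcd_natCast_natCast]
    exact Nat.coprime_comm.mp ((Nat.Prime.coprime_iff_not_dvd Nat.prime_two).mpr hnd)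
  exact hcop.dvd_of_dvd_mul_left hdvd2



/-- key divisibility: for d a proper divisor of n,
    the cyclotomic value divides (x^n - 1)/(x^d - 1). -/
lemma cycl_dvd_quot {d n : ℕ} (hd : d ∈ n.properDivisors) {x : ℤ} (hx : 2 ≤ x) (k : ℕ)
    (hk : d * k = n) :
    (cyclotomic n ℤ).eval x ∣ ∑ j ∈ range k, (x ^ d) ^ j := by
  have h := X_pow_sub_one_mul_cyclotomic_dvd_X_pow_sub_one_of_dvd ℤ hd
  have h2 : (x ^ d - 1) * (cyclotomic n ℤ).eval x ∣ x ^ n - 1 := by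
    have := (evalRingHom x).map_dvd h
    simpa using this
  have hg : (x ^ d - 1) * ∑ j ∈ range k, (x ^ d) ^ j = x ^ n - 1 := by
    rw [mul_geom_sum, ← pow_mul, hk]
  rw [← hg] at h2
  have hne : x ^ d - 1 ≠ 0 := by
    have hd1 : 0 < d := Nat.pos_of_mem_properDivisors hd
    have h2 : (2:ℤ) ≤ x ^ d := le_trans hx (le_self_pow₀ (by linarith) hd1.ne')
    intro h
    linarith
  exact (mul_dvd_mul_iff_left hne).mp h2

/-- iterating expand: Φ_{e p^β}(x) = Φ_{e p}(x^{p^{β-1}}) -/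
lemma eval_iter {p e : ℕ} (hp : p.Prime) (β : ℕ) (hβ : 1 ≤ β) (x : ℤ) :
    (cyclotomic (e * p ^ β) ℤ).eval x = (cyclotomic (e * p) ℤ).eval (x ^ p ^ (β - 1)) := by
  induction β generalizing x with
  | zero => omega
  | succ b ih =>
    rcases Nat.eq_zero_or_pos b with rfl | hb
    · simp
    · have hdvd : p ∣ e * p ^ b := Dvd.dvd.mul_left (dvd_pow_self p hb.ne') e
      have hexp := cyclotomic_expand_eq_cyclotomic hp hdvd ℤ
      have hmul : e * p ^ (b+1) = e * p ^ b * p := by ring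
      have hexps : p * p ^ (b - 1) = p ^ (b + 1 - 1) := by
        rw [← pow_succ']
        congr 1
        omega
      rw [hmul, ← hexp, expand_eval, ih hb (x ^ p), ← pow_mul, hexps]

/-- multiplicative relation: Φ_{ep}(x) * Φ_e(x) = Φ_e(x^p) for p ∤ e -/
lemma eval_mul_rel {p e : ℕ} (hp : p.Prime) (hpe : ¬ p ∣ e) (x : ℤ) :
    (cyclotomic (e * p) ℤ).eval x * (cyclotomic e ℤ).eval x = (cyclotomic e ℤ).eval (x ^ p) := by
  have h := cyclotomic_expand_eq_cyclotomic_mul hp hpe ℤ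
  have := congrArg (eval x) h
  rw [expand_eval, eval_mul] at this
  exact this.symm

lemma two_mul_le_pow {p : ℕ} (hp : 5 ≤ p) : 2 * p ≤ 2 ^ (p - 1) := by
  induction p with
  | zero => omega
  | succ k ih =>
    rcases Nat.lt_or_ge k 5 with h | h
    · interval_cases k <;> simp_all <;> omega
    · have := ih (by omega)
      have h2 : k - 1 + 1 = k := by omega
      have : 2 ^ k = 2 * 2 ^ (k-1) := by rw [← pow_succ', h2]
      simp only [Nat.add_sub_cancel]
      omega

lemma le_two_pow {p : ℕ} (hp : 1 ≤ p) : p ≤ 2 ^ (p - 1) := by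
  induction p with
  | zero => omega
  | succ k ih =>
    rcases Nat.eq_zero_or_pos k with rfl | hk
    · simp
    · have := ih hk
      have h2 : k - 1 + 1 = k := by omega
      have : 2 ^ k = 2 * 2 ^ (k-1) := by rw [← pow_succ', h2]
      simp only [Nat.add_sub_cancel]
      omega


end Zsig

theorem exists_primitive_prime_divisor_iff (t n : ℕ) (ht : 1 < t) (hn : 1 < n) :
    (∃ r : ℕ, r.Prime ∧ r ∣ t ^ n - 1 ∧ ∀ i : ℕ, 1 ≤ i → i < n → ¬ r ∣ t ^ i - 1) ↔
      ¬ ((n = 6 ∧ t = 2) ∨ (n = 2 ∧ ∃ l : ℕ, 2 ≤ l ∧ t = 2 ^ l - 1)) := by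
  constructor
  · rintro ⟨r, hr, hdvd, hmin⟩ (⟨hn6, ht2⟩ | ⟨hn2, l, hl, htl⟩)
    · subst hn6; subst ht2
      have h3 : ¬ r ∣ 3 := by
        have := hmin 2 (by norm_num) (by norm_num); simpa using this
      have h7 : ¬ r ∣ 7 := by
        have := hmin 3 (by norm_num) (by norm_num); simpa using this
      have h63 : r ∣ 3 * (3 * 7) := by simpa using hdvd
      rcases (Nat.Prime.dvd_mul hr).mp h63 with h | h
      · exact h3 h
      rcases (Nat.Prime.dvd_mul hr).mp h with h | h
      · exact h3 h
      · exact h7 h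
    · subst hn2
      have hl4 : 4 ≤ 2 ^ l := by
        calc (4:ℕ) = 2 ^ 2 := by norm_num
        _ ≤ 2 ^ l := Nat.pow_le_pow_right (by norm_num) hl
      have htv : t + 1 = 2 ^ l := by omega
      have hoddt : t % 2 = 1 := by
        have h2 : 2 ∣ 2 ^ l := dvd_pow_self 2 (by omega)
        omega
      have hr1 : r ∣ t - 1 := by
        rcases hr.eq_two_or_odd' with rfl | hro
        · omega
        · have h1 : (r:ℤ) ∣ (t:ℤ) ^ 2 - 1 := (Zsig.bridge (by omega) 2).mp hdvd
          have h2 : (r:ℤ) ∣ ((t:ℤ) - 1) * ((t:ℤ) + 1) := by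
            have : ((t:ℤ) - 1) * ((t:ℤ) + 1) = (t:ℤ) ^ 2 - 1 := by ring
            rwa [this]
          have hrZ : Prime (r:ℤ) := Nat.prime_iff_prime_int.mp hr
          rcases hrZ.dvd_mul.mp h2 with h | h
          · have h1' : (r:ℤ) ∣ (t:ℤ) ^ 1 - 1 := by simpa using h
            have := (Zsig.bridge (r := r) (t := t) (by omega) 1).mpr h1'
            simpa using this
          · exfalso
            have htp : (t:ℤ) + 1 = 2 ^ l := by exact_mod_cast htv
            rw [htp] at h
            have hlp : r ∣ 2 ^ l := by exact_mod_cast h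
            have h2' : r ∣ 2 := hr.dvd_of_dvd_pow hlp
            have := (Nat.prime_dvd_prime_iff_eq hr Nat.prime_two).mp h2'
            rcases hro with ⟨k, hk⟩
            omega
      exact hmin 1 le_rfl hn (by simpa using hr1)
  · intro hexc
    by_contra hno
    push_neg at hno
    -- hno : ∀ r, r.Prime → r ∣ t ^ n - 1 → ∃ i, 1 ≤ i ∧ i < n ∧ r ∣ t ^ i - 1
    have hn0 : 0 < n := by omega
    have ht0 : (1:ℕ) ≤ t := by omega
    set P : ℤ := (cyclotomic n ℤ).eval (t : ℤ) with hPdef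
    set N : ℕ := P.natAbs with hNdef
    have hNlb : t - 1 < N := Polynomial.sub_one_lt_natAbs_cyclotomic_eval hn (by omega)
    have hN2 : 2 ≤ N := by omega
    have hPpos : 0 < P := by
      have h1 : (0:ℝ) < (cyclotomic n ℝ).eval (((t:ℤ)) : ℝ) := by
        apply Zsig.cycl_pos hn
        push_cast
        exact_mod_cast ht
      rw [← Zsig.cycl_cast] at h1
      exact_mod_cast h1
    have hPN : (N : ℤ) = P := Int.natAbs_of_nonneg hPpos.le
    have hPdvd : P ∣ (t:ℤ) ^ n - 1 := Zsig.cycl_dvd n (t:ℤ)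
    have hNdvd : N ∣ t ^ n - 1 := by
      rw [Zsig.bridge ht0 n]
      rw [hPN]
      exact hPdvd
    -- every prime dividing N divides n
    have claimA : ∀ r, r.Prime → r ∣ N → r ∣ n := by
      intro r hr hrN
      by_contra hrn
      have hrP : (r:ℤ) ∣ P := by rw [← hPN]; exact_mod_cast hrN
      have hord := Zsig.order_eq_of_not_dvd hr hn0 hrP hrn
      obtain ⟨i, hi1, hiln, hidvd⟩ := hno r hr (dvd_trans hrN hNdvd)
      have h1 : (t : ZMod r) ^ i = 1 := (Zsig.bridge2 i).mp ((Zsig.bridge ht0 i).mp hidvd)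
      have h2 := orderOf_dvd_of_pow_eq_one h1
      rw [hord] at h2
      have := Nat.le_of_dvd (by omega) h2
      omega
    obtain ⟨p, hp, hpN⟩ := Nat.exists_prime_and_dvd (show N ≠ 1 by omega)
    have hpn : p ∣ n := claimA p hp hpN
    have hpP : (p:ℤ) ∣ P := by rw [← hPN]; exact_mod_cast hpN
    have huniq : ∀ q, q.Prime → q ∣ N → q = p := by
      intro q hq hqN
      by_contra hne
      have hqn := claimA q hq hqN
      have hqP : (q:ℤ) ∣ P := by rw [← hPN]; exact_mod_cast hqN
      have h1 := Zsig.lt_of_prime_dvd hp hn0 hpP hpn hq hqn hne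
      have h2 := Zsig.lt_of_prime_dvd hq hn0 hqP hqn hp hpn (Ne.symm hne)
      omega
    have hNpk : N = p ^ N.primeFactorsList.length :=
      Nat.eq_prime_pow_of_unique_prime_dvd (by omega) (fun hd hdN => huniq _ hd hdN)
    rcases hp.eq_two_or_odd' with rfl | hoddp
    · -- p = 2 case
      -- t is odd
      have htodd : t % 2 = 1 := by
        rcases Nat.even_or_odd t with he | ho
        · exfalso
          have h2d : (2:ℕ) ∣ t ^ n - 1 := dvd_trans hpN hNdvd
          have h2n : 2 ∣ t ^ n := dvd_pow he.two_dvd hn0.ne'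
          have h1 : 1 ≤ t ^ n := Nat.one_le_pow _ _ (by omega)
          omega
        · exact Nat.odd_iff.mp ho
      -- n is a power of 2
      have hall2 : ∀ q, q.Prime → q ∣ n → q = 2 := by
        intro q hq hqn
        by_contra hne
        have := Zsig.lt_of_prime_dvd hp hn0 hpP hpn hq hqn hne
        have := hq.two_le
        omega
      have hn2pow : n = 2 ^ n.primeFactorsList.length :=
        Nat.eq_prime_pow_of_unique_prime_dvd (by omega) (fun hd hdN => hall2 _ hd hdN)
      set β := n.primeFactorsList.length with hβdef
      have hβ1 : 1 ≤ β := by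
        by_contra h
        have : β = 0 := by omega
        rw [this] at hn2pow
        omega
      rcases eq_or_lt_of_le hβ1 with hβeq | hβ2
      · -- β = 1, n = 2 : the Mersenne exception
        have hn2 : n = 2 := by rw [hn2pow, ← hβeq]; norm_num
        have hP2 : P = (t:ℤ) + 1 := by
          rw [hPdef, hn2]
          simp [cyclotomic_two]
        have hNt : N = t + 1 := by
          have : (N:ℤ) = (t:ℤ) + 1 := by rw [hPN, hP2]
          exact_mod_cast this
        set k := N.primeFactorsList.length with hkdef
        have htk : t + 1 = 2 ^ k := by rw [← hNt, hNpk]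
        have hk2 : 2 ≤ k := by
          by_contra h
          have hle : 2 ^ k ≤ 2 ^ 1 := Nat.pow_le_pow_right (by norm_num) (by omega)
          norm_num at hle
          omega
        exact hexc (Or.inr ⟨hn2, k, hk2, by omega⟩)
      · -- β ≥ 2
        exfalso
        set m := n / 2 with hmdef
        have hmn : m * 2 = n := Nat.div_mul_cancel hpn
        have hm1 : 1 ≤ m := by omega
        have hm_proper : m ∈ n.properDivisors := by
          rw [Nat.mem_properDivisors]
          exact ⟨⟨2, hmn.symm⟩, by omega⟩
        have hPS : P ∣ ∑ j ∈ range 2, ((t:ℤ) ^ m) ^ j :=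
          Zsig.cycl_dvd_quot hm_proper (by exact_mod_cast ht) 2 hmn
        have hPS' : P ∣ (t:ℤ) ^ m + 1 := by
          have hs : ∑ j ∈ range 2, ((t:ℤ) ^ m) ^ j = (t:ℤ) ^ m + 1 := by
            simp [Finset.sum_range_succ]
            ring
          rwa [hs] at hPS
        have hNS : N ∣ t ^ m + 1 := by
          have : (N:ℤ) ∣ ((t ^ m + 1 : ℕ) : ℤ) := by
            rw [hPN]; push_cast; exact hPS'
          exact_mod_cast this
        -- m is even
        have hmeven : 2 ∣ m := by
          have : m = 2 ^ (β - 1) := by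
            have : 2 ^ (β - 1) * 2 = n := by
              rw [hn2pow, ← pow_succ]
              congr 1
              omega
            omega
          rw [this]
          exact dvd_pow_self 2 (by omega)
        -- t^m ≡ 1 mod 4
        have htm4 : t ^ m % 4 = 1 := by
          obtain ⟨m', hm'⟩ := hmeven
          obtain ⟨j, hj⟩ : ∃ j, t = 2 * j + 1 := ⟨t / 2, by omega⟩
          have ht2m : t ^ 2 % 4 = 1 := by
            have : t ^ 2 = 4 * (j * j + j) + 1 := by rw [hj]; ring
            omega
          rw [hm', pow_mul, Nat.pow_mod, ht2m]
          simp [Nat.one_pow, Nat.pow_mod]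
        -- N is a power of 2 that is ≥ 4
        have hN4 : 4 ∣ N := by
          have ht3 : 3 ≤ t := by omega
          have hk2 : 2 ≤ N.primeFactorsList.length := by
            by_contra h
            have hle : 2 ^ N.primeFactorsList.length ≤ 2 ^ 1 :=
              Nat.pow_le_pow_right (by norm_num) (by omega)
            norm_num at hle
            omega
          calc (4:ℕ) = 2 ^ 2 := by norm_num
          _ ∣ 2 ^ N.primeFactorsList.length := pow_dvd_pow 2 hk2
          _ = N := hNpk.symm
        have : 4 ∣ t ^ m + 1 := dvd_trans hN4 hNS
        omega
    · -- p odd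
      have hp3 : 3 ≤ p := by
        have := hp.two_le
        rcases hoddp with ⟨k, hk⟩
        omega
      have hβpos : 1 ≤ n.factorization p := hp.factorization_pos_of_dvd hn0.ne' hpn
      set β := n.factorization p with hβdef
      set e := ordCompl[p] n with hedef
      have hprim : IsPrimitiveRoot ((t:ZMod p)) e := Zsig.primroot_of_dvd hp hn0 hpP hpn
      have hepos : 0 < e := Nat.ordCompl_pos p hn0.ne'
      have hedvd : e ∣ p - 1 := Zsig.e_dvd_sub_one hp hepos hprim
      have hpe : ¬ p ∣ e := Nat.not_dvd_ordCompl hp hn0.ne'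
      have hnEq : n = e * p ^ β := by
        rw [← Nat.ordProj_mul_ordCompl_eq_self n p, mul_comm]
      set m := n / p with hmdef
      have hmn : m * p = n := Nat.div_mul_cancel hpn
      have hmEq : m = e * p ^ (β - 1) := by
        have h1 : e * p ^ (β - 1) * p = n := by
          rw [mul_assoc, ← pow_succ]
          rw [hnEq]
          congr 2
          omega
        have hppos := hp.pos
        exact Nat.eq_of_mul_eq_mul_right hppos (by rw [hmn, h1])
      have hem : e ∣ m := ⟨p ^ (β - 1), hmEq⟩
      have hm1 : 1 ≤ m := by
        rw [hmEq]
        exact Nat.mul_pos hepos (Nat.pow_pos hp.pos)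
      have htm : (p:ℤ) ∣ (t:ℤ) ^ m - 1 := by
        rw [Zsig.bridge2]
        obtain ⟨s, hs⟩ := hem
        rw [hs, pow_mul, hprim.pow_eq_one, one_pow]
      have hm_proper : m ∈ n.properDivisors := by
        rw [Nat.mem_properDivisors]
        constructor
        · exact ⟨p, hmn.symm⟩
        · have := hp.two_le
          nlinarith [hmn]
      have hPS : P ∣ ∑ j ∈ range p, ((t:ℤ) ^ m) ^ j :=
        Zsig.cycl_dvd_quot hm_proper (by exact_mod_cast ht) p hmn
      have hSp := Zsig.geom_sum_mod_sq hp hoddp htm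
      have hp2P : ¬ ((p:ℤ) ^ 2 ∣ P) := by
        intro hsq
        have h1 : (p:ℤ) ^ 2 ∣ ∑ j ∈ range p, ((t:ℤ) ^ m) ^ j := dvd_trans hsq hPS
        have h3 : (p:ℤ) ^ 2 ∣ (p:ℤ) := by
          have := dvd_sub h1 hSp
          simpa using this
        have h4 := Int.le_of_dvd (by exact_mod_cast hp.pos) h3
        have h5 : (p:ℤ) ≥ 3 := by exact_mod_cast hp3
        nlinarith
      -- N = p
      have hNp : N = p := by
        set k := N.primeFactorsList.length with hkdef
        have hk1 : 1 ≤ k := by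
          by_contra h
          have : k = 0 := by omega
          rw [this, pow_zero] at hNpk
          omega
        have hk2 : k < 2 := by
          by_contra h
          have hdvd2 : p ^ 2 ∣ N := by
            rw [hNpk]
            exact pow_dvd_pow p (by omega)
          apply hp2P
          rw [← hPN]
          exact_mod_cast Int.natCast_dvd_natCast.mpr hdvd2
        have : k = 1 := by omega
        rw [hNpk, this, pow_one]
      -- totient bound
      have hφ : p - 1 ≤ n.totient := by
        have h1 : Nat.totient p ∣ Nat.totient n := Nat.totient_dvd_of_dvd hpn
        rw [Nat.totient_prime hp] at h1
        exact Nat.le_of_dvd (Nat.totient_pos.mpr hn0) h1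
      rcases Nat.lt_or_ge t 3 with ht2 | ht3
      · -- t = 2
        have ht2' : t = 2 := by omega
        -- the order e is at least 2
        have he2 : 2 ≤ e := by
          rcases eq_or_lt_of_le (show 1 ≤ e from hepos) with he1 | h
          · exfalso
            have hpow := hprim.pow_eq_one
            rw [← he1, pow_one, ht2'] at hpow
            have hcast : ((2:ℕ) : ZMod p) = ((1:ℕ) : ZMod p) := by exact_mod_cast hpow
            have hmod := (ZMod.natCast_eq_natCast_iff _ _ _).mp hcast
            have h2' : 2 % p = 2 := Nat.mod_eq_of_lt (by omega)
            have h1' : 1 % p = 1 := Nat.mod_eq_of_lt (by omega)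
            rw [Nat.ModEq, h2', h1'] at hmod
            omega
          · omega
        set T : ℤ := 2 ^ p ^ (β - 1) with hTdef
        have hT2 : (2:ℤ) ≤ T :=
          le_self_pow₀ (by norm_num) (Nat.pow_pos hp.pos).ne'
        have htZ : ((t:ℕ) : ℤ) = 2 := by rw [ht2']; norm_num
        have hkey : P = (cyclotomic (e * p) ℤ).eval T := by
          rw [hPdef, htZ, hnEq]
          exact Zsig.eval_iter hp β hβpos 2
        have hrel := Zsig.eval_mul_rel hp hpe T
        have hPp : P = (p:ℤ) := by rw [← hPN, hNp]
        have hmain : (p:ℤ) * (cyclotomic e ℤ).eval T = (cyclotomic e ℤ).eval (T ^ p) := by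
          rw [← hrel, ← hkey, hPp]
        clear_value T
        rcases eq_or_lt_of_le he2 with he2' | he3
        · -- e = 2
          rw [← he2', cyclotomic_two] at hmain
          simp only [eval_add, eval_X, eval_one] at hmain
          rcases eq_or_lt_of_le hp3 with hp3' | hp4
          · -- p = 3, forces T = 2 hence n = 6, the excluded case
            rw [← hp3'] at hmain
            push_cast at hmain
            have hTle : T ≤ 2 := by
              by_contra hTc
              push_neg at hTc
              have ha0 : (0:ℤ) ≤ T := by linarith
              have ha1 : 3 * T ≤ T * T := mul_le_mul_of_nonneg_right (by linarith) ha0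
              have ha2 : 3 * (T * T) ≤ T * (T * T) :=
                mul_le_mul_of_nonneg_right (by linarith) (by positivity)
              have ha3 : T ^ 3 = T * (T * T) := by ring
              linarith
            have hT : T = 2 := le_antisymm hTle hT2
            have hβ1 : β = 1 := by
              by_contra hb
              have hb2 : 2 ≤ β := by omega
              have hle : p ≤ p ^ (β - 1) := Nat.le_self_pow (by omega) p
              have h8 : (2:ℤ) ^ 3 ≤ T := by
                rw [hTdef]
                apply pow_le_pow_right₀ (by norm_num)
                omega
              norm_num at h8
              omega
            apply hexc
            left
            refine ⟨?_, ht2'⟩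
            rw [hnEq, ← he2', hβ1, ← hp3']
            norm_num
          · -- p ≥ 5
            exfalso
            have hp5' : 5 ≤ p := by
              rcases hoddp with ⟨k, hk⟩
              omega
            have hps : p - 1 + 1 = p := by omega
            have h1 : T ^ p = T ^ (p-1) * T := by rw [← pow_succ, hps]
            have h2 : (2:ℤ) ^ (p-1) ≤ T ^ (p-1) := pow_le_pow_left₀ (by norm_num) hT2 _
            have h3 : (2 * p : ℤ) ≤ 2 ^ (p-1) := by
              have := Zsig.two_mul_le_pow hp5'
              exact_mod_cast this
            have h4 : (0:ℤ) ≤ T := by linarith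
            have h5 : (2 * (p:ℤ)) * T ≤ T ^ (p-1) * T :=
              mul_le_mul_of_nonneg_right (le_trans h3 h2) h4
            have h6 : (5:ℤ) ≤ (p:ℤ) := by exact_mod_cast hp5'
            have h7 : (0:ℤ) ≤ (p:ℤ) * (T - 2) :=
              mul_nonneg (by linarith) (by linarith)
            have h8 : (p:ℤ) * (T + 1) = (p:ℤ) * T + p := by ring
            have h9 : (p:ℤ) * (T - 2) = (p:ℤ) * T - 2 * p := by ring
            have h10 : (2 * (p:ℤ)) * T = 2 * ((p:ℤ) * T) := by ring
            linarith
        · -- e ≥ 3 : real size estimates give a contradiction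
          exfalso
          have hp5' : 5 ≤ p := by
            have h4 : e ≤ p - 1 := Nat.le_of_dvd (by omega) hedvd
            rcases hoddp with ⟨k, hk⟩
            omega
          set φe := e.totient with hφedef
          have hφe1 : 1 ≤ φe := Nat.totient_pos.mpr hepos
          have hTR : (1:ℝ) < (T:ℝ) := by
            exact_mod_cast (by linarith : (1:ℤ) < T)
          have hTp1 : (1:ℝ) < (T:ℝ) ^ p := one_lt_pow₀ hTR hp.pos.ne'
          have hub := cyclotomic_eval_lt_add_one_pow_totient (show 3 ≤ e from he3) hTR
          have hlb := sub_one_pow_totient_lt_cyclotomic_eval (show 2 ≤ e by omega) hTp1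
          have hmainR : (p:ℝ) * (cyclotomic e ℝ).eval (T:ℝ)
              = (cyclotomic e ℝ).eval ((T:ℝ) ^ p) := by
            have hc := congrArg (fun z : ℤ => (z:ℝ)) hmain
            simp only [Int.cast_mul, Int.cast_natCast] at hc
            rw [Zsig.cycl_cast, Zsig.cycl_cast] at hc
            push_cast at hc
            exact hc
          -- integer inequality p (T+1) ≤ T^p - 1
          have hZ : (p:ℤ) * (T + 1) ≤ T ^ p - 1 := by
            have hps : p - 1 + 1 = p := by omega
            have h1 : T ^ p = T ^ (p-1) * T := by rw [← pow_succ, hps]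
            have h2 : (2:ℤ) ^ (p-1) ≤ T ^ (p-1) := pow_le_pow_left₀ (by norm_num) hT2 _
            have h3 : (2 * p : ℤ) ≤ 2 ^ (p-1) := by
              have := Zsig.two_mul_le_pow hp5'
              exact_mod_cast this
            have h4 : (0:ℤ) ≤ T := by linarith
            have h5 : (2 * (p:ℤ)) * T ≤ T ^ (p-1) * T :=
              mul_le_mul_of_nonneg_right (le_trans h3 h2) h4
            have h6 : (5:ℤ) ≤ (p:ℤ) := by exact_mod_cast hp5'
            have h7 : (0:ℤ) ≤ (p:ℤ) * (T - 2) :=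
              mul_nonneg (by linarith) (by linarith)
            have h8 : (p:ℤ) * (T + 1) = (p:ℤ) * T + p := by ring
            have h9 : (p:ℤ) * (T - 2) = (p:ℤ) * T - 2 * p := by ring
            have h10 : (2 * (p:ℤ)) * T = 2 * ((p:ℤ) * T) := by ring
            linarith
          have hR : (p:ℝ) * ((T:ℝ) + 1) ≤ (T:ℝ) ^ p - 1 := by exact_mod_cast hZ
          have hA : ((p:ℝ) * ((T:ℝ) + 1)) ^ φe ≤ ((T:ℝ) ^ p - 1) ^ φe :=
            pow_le_pow_left₀ (by positivity) hR _
          have hppos : (0:ℝ) < (p:ℝ) := by exact_mod_cast hp.pos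
          have hBp : (p:ℝ) ≤ (p:ℝ) ^ φe := le_self_pow₀ (by exact_mod_cast hp.one_lt.le) (Nat.one_le_iff_ne_zero.mp hφe1)
          have hB : (p:ℝ) * ((T:ℝ) + 1) ^ φe ≤ ((p:ℝ) * ((T:ℝ) + 1)) ^ φe := by
            rw [mul_pow]
            exact mul_le_mul_of_nonneg_right hBp (by positivity)
          have hfin : (p:ℝ) * (cyclotomic e ℝ).eval (T:ℝ) < (p:ℝ) * ((T:ℝ) + 1) ^ φe :=
            mul_lt_mul_of_pos_left hub hppos
          linarith [hlb, hA, hB, hfin, hmainR]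
      · -- t ≥ 3 : contradiction via size
        have hlb := Polynomial.sub_one_pow_totient_lt_natAbs_cyclotomic_eval hn
          (show t ≠ 1 by omega)
        have hlb' : (t - 1) ^ n.totient < p := by
          rw [← hNp]
          exact hlb
        have h1 : 2 ^ (p - 1) ≤ (t - 1) ^ n.totient := by
          calc 2 ^ (p-1) ≤ 2 ^ n.totient := Nat.pow_le_pow_right (by norm_num) hφ
          _ ≤ (t - 1) ^ n.totient := Nat.pow_le_pow_left (by omega) _
        have h2 : p ≤ 2 ^ (p - 1) := Zsig.le_two_pow hp.pos
        omega
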